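/- arXiv:1711.05452 — 2 statements merged into one kernel-verified Lean document; each statement's English description precedes it below -/
import Mathlib

section
/- Let (K, φ) be a topological dynamical system with discrete spectrum and let q : K → L be a projection onto its maximal trivial factor. Then for every l ∈ L the fiber system (K_l, φ_l) is minimal and has discrete spectrum. -/
/-- A topological dynamical system has discrete spectrum if the linear span of the
eigenvectors of its Koopman operator with unimodular eigenvalues is dense in `C(K)`. -/
def DiscreteSpectrum {K : Type*} [TopologicalSpace K] (φ : K → K) : Prop :=
  Dense (↑(Submodule.span ℂ
    {f : C(K, ℂ) | f ≠ 0 ∧ ∃ lam : ℂ, ‖lam‖ = 1 ∧ ∀ x, f (φ x) = lam * f x}) :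
      Set C(K, ℂ))

/-- A topological dynamical system `(S, ψ)` is minimal if it has no nonempty proper closed
invariant subset. -/
def IsMinimalSystem {S : Type*} [TopologicalSpace S] (ψ : S → S) : Prop :=
  ∀ C : Set S, IsClosed C → Set.MapsTo ψ C C → C.Nonempty → C = Set.univ

/-- The restriction of `φ` to the fiber `q⁻¹ {l}`. -/
def fiberMap {K L : Type*} (φ : K → K) (q : K → L) (hinv : ∀ x, q (φ x) = q x) (l : L)
    (x : ↥(q ⁻¹' {l})) : ↥(q ⁻¹' {l}) :=
  ⟨φ ↑x, by rw [Set.mem_preimage, Set.mem_singleton_iff, hinv]; exact x.2⟩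

/-- Simultaneous recurrence for finitely many unimodular complex numbers. -/
lemma aux_recur {ι : Type*} [Fintype ι] (lam : ι → ℂ) (hlam : ∀ i, ‖lam i‖ = 1)
    {ε : ℝ} (hε : 0 < ε) : ∃ m : ℕ, 1 ≤ m ∧ ∀ i, ‖lam i ^ m - 1‖ < ε := by
  set u : ℕ → ι → ℂ := fun n i => lam i ^ n with hu
  have hmem : ∀ n, u n ∈ Metric.closedBall (0 : ι → ℂ) 1 := by
    intro n
    rw [Metric.mem_closedBall, dist_zero_right]
    refine (pi_norm_le_iff_of_nonneg zero_le_one).mpr fun i => ?_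
    rw [hu]; simp only [norm_pow, hlam i, one_pow]; exact le_rfl
  obtain ⟨a, -, g, hg, hconv⟩ :=
    (isCompact_closedBall (0 : ι → ℂ) 1).tendsto_subseq hmem
  rw [Metric.tendsto_atTop] at hconv
  obtain ⟨N, hN⟩ := hconv (ε / 2) (half_pos hε)
  have hlt : g N < g (N + 1) := hg (Nat.lt_succ_self N)
  refine ⟨g (N + 1) - g N, by omega, fun i => ?_⟩
  have h1 := hN N le_rfl
  have h2 := hN (N + 1) (Nat.le_succ N)
  have hd : dist (u (g (N + 1))) (u (g N)) < ε := by
    calc dist (u (g (N + 1))) (u (g N))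
        ≤ dist (u (g (N + 1))) a + dist (u (g N)) a := dist_triangle_right _ _ _
      _ < ε / 2 + ε / 2 := add_lt_add (by simpa using h2) (by simpa using h1)
      _ = ε := add_halves ε
  have hdi := (dist_le_pi_dist (u (g (N + 1))) (u (g N)) i).trans_lt hd
  have hkey : lam i ^ g (N + 1) - lam i ^ g N
      = lam i ^ g N * (lam i ^ (g (N + 1) - g N) - 1) := by
    rw [mul_sub, mul_one, ← pow_add]
    congr 2
    omega
  calc ‖lam i ^ (g (N + 1) - g N) - 1‖
      = ‖lam i ^ g N‖ * ‖lam i ^ (g (N + 1) - g N) - 1‖ := by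
        rw [norm_pow, hlam i, one_pow, one_mul]
    _ = ‖lam i ^ g (N + 1) - lam i ^ g N‖ := by rw [← norm_mul, ← hkey]
    _ < ε := by rwa [dist_eq_norm] at hdi

/-- Eigenfunctions separate points. -/
lemma aux_sep {K : Type*} [TopologicalSpace K] [CompactSpace K] [T2Space K] {φ : K → K}
    (hds : DiscreteSpectrum φ) {w y : K} (hne : w ≠ y) :
    ∃ f : C(K, ℂ), (f ≠ 0 ∧ ∃ lam : ℂ, ‖lam‖ = 1 ∧ ∀ x, f (φ x) = lam * f x) ∧ f w ≠ f y := by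
  by_contra hcon
  push_neg at hcon
  -- the evaluation-difference functional
  set D : C(K, ℂ) →ₗ[ℂ] ℂ :=
    { toFun := fun f => f w - f y
      map_add' := fun a b => by simp [ContinuousMap.add_apply]; ring
      map_smul' := fun c a => by simp [ContinuousMap.smul_apply]; ring } with hD
  have hker : {f : C(K, ℂ) | f ≠ 0 ∧ ∃ lam : ℂ, ‖lam‖ = 1 ∧ ∀ x, f (φ x) = lam * f x}
      ⊆ ↑(LinearMap.ker D) := by
    intro f hf
    have := hcon f hf
    simp only [SetLike.mem_coe, LinearMap.mem_ker, hD, LinearMap.coe_mk, AddHom.coe_mk]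
    rw [this, sub_self]
  obtain ⟨uu, huw, huy, -⟩ := exists_continuous_zero_one_of_isClosed
    (isClosed_singleton (x := w)) (isClosed_singleton (x := y))
    (Set.disjoint_singleton.mpr hne)
  set G : C(K, ℂ) := ⟨fun z => (uu z : ℂ), Complex.continuous_ofReal.comp uu.continuous⟩ with hG
  have hGw : G w = 0 := by
    have := huw (Set.mem_singleton w); simp [hG]; simpa using this
  have hGy : G y = 1 := by
    have := huy (Set.mem_singleton y); simp [hG]; simpa using this
  have hmem := hds G
  rw [Metric.mem_closure_iff] at hmem
  obtain ⟨p, hp, hdist⟩ := hmem (1 / 2) (by norm_num)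
  have hpker : p ∈ LinearMap.ker D := Submodule.span_le.mpr hker hp
  have hpwy : p w = p y := by
    have := LinearMap.mem_ker.mp hpker
    simp only [hD, LinearMap.coe_mk, AddHom.coe_mk] at this
    linear_combination this
  have h1 : ‖G w - p w‖ < 1 / 2 := by
    have := ContinuousMap.norm_coe_le_norm (G - p) w
    simp only [ContinuousMap.sub_apply] at this
    calc ‖G w - p w‖ ≤ ‖G - p‖ := this
      _ = dist G p := (dist_eq_norm G p).symm
      _ < 1 / 2 := hdist
  have h2 : ‖G y - p y‖ < 1 / 2 := by
    have := ContinuousMap.norm_coe_le_norm (G - p) y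
    simp only [ContinuousMap.sub_apply] at this
    calc ‖G y - p y‖ ≤ ‖G - p‖ := this
      _ = dist G p := (dist_eq_norm G p).symm
      _ < 1 / 2 := hdist
  have : (1 : ℝ) < 1 := by
    calc (1 : ℝ) = ‖G y - G w‖ := by rw [hGy, hGw, sub_zero, norm_one]
      _ = ‖(G y - p y) + (p w - G w)‖ := by rw [hpwy]; ring_nf
      _ ≤ ‖G y - p y‖ + ‖p w - G w‖ := norm_add_le _ _
      _ = ‖G y - p y‖ + ‖G w - p w‖ := by rw [norm_sub_rev (p w)]
      _ < 1 / 2 + 1 / 2 := add_lt_add h2 h1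
      _ = 1 := by norm_num
  exact absurd this (lt_irrefl 1)

/-- Key lemma: if all invariant continuous functions agree at `x` and `y`, then
the values of finitely many eigenfunctions at `y` are approximated along the orbit of `x`. -/
lemma aux_key {K : Type*} [TopologicalSpace K] (φ : K → K) (x y : K)
    (hconst : ∀ f : C(K, ℂ), (∀ z, f (φ z) = f z) → f x = f y)
    {ι : Type*} [Fintype ι] (f : ι → C(K, ℂ)) (lam : ι → ℂ)
    (hlam : ∀ i, ‖lam i‖ = 1) (heig : ∀ i z, f i (φ z) = lam i * f i z)
    {ε : ℝ} (hε : 0 < ε) :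
    ∃ n : ℕ, ∀ i, ‖f i y - f i (φ^[n] x)‖ < ε := by
  classical
  set ρ : K → ℕ → ℝ := fun z n => ∑ i, ‖f i z - f i (φ^[n] x)‖ with hρ
  have hρnn : ∀ z n, 0 ≤ ρ z n := fun z n => Finset.sum_nonneg fun i _ => norm_nonneg _
  have hbdd : ∀ z, BddBelow (Set.range (ρ z)) := fun z =>
    ⟨0, by rintro r ⟨n, rfl⟩; exact hρnn z n⟩
  set h : K → ℝ := fun z => ⨅ n, ρ z n with hh
  have hhnn : ∀ z, 0 ≤ h z := fun z => le_ciInf (hρnn z)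
  have hle : ∀ z n, h z ≤ ρ z n := fun z n => ciInf_le (hbdd z) n
  have hiter : ∀ i n, f i (φ^[n] x) = lam i ^ n * f i x := by
    intro i n
    induction n with
    | zero => simp
    | succ n ih => rw [Function.iterate_succ_apply', heig, ih, pow_succ]; ring
  have hstep : ∀ z n, ρ (φ z) (n + 1) = ρ z n := by
    intro z n
    refine Finset.sum_congr rfl fun i _ => ?_
    rw [Function.iterate_succ_apply', heig, heig, ← mul_sub, norm_mul, hlam, one_mul]
  have htri : ∀ z n, ρ z n ≤ ρ z 0 + ρ x n := by
    intro z n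
    rw [hρ]
    simp only []
    rw [← Finset.sum_add_distrib]
    refine Finset.sum_le_sum fun i _ => ?_
    have hrw : f i z - f i (φ^[n] x)
        = (f i z - f i (φ^[0] x)) + (f i x - f i (φ^[n] x)) := by
      rw [Function.iterate_zero_apply]; ring
    rw [hrw]
    exact norm_add_le _ _
  have hinv2 : ∀ z, h (φ z) = h z := by
    intro z
    refine le_antisymm (le_ciInf fun n => (hle (φ z) (n + 1)).trans_eq (hstep z n)) ?_
    refine le_ciInf fun n => ?_
    match n with
    | Nat.succ m => rw [hstep z m]; exact hle z m
    | 0 =>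
      refine le_of_forall_pos_le_add fun ε' hε' => ?_
      set B : ℝ := ∑ i, ‖f i x‖ with hB
      have hBnn : 0 ≤ B := Finset.sum_nonneg fun i _ => norm_nonneg _
      have hpos : 0 < ε' / (B + 1) := div_pos hε' (by linarith)
      obtain ⟨m, hm1, hm2⟩ := aux_recur lam hlam hpos
      have hxm : ρ x m ≤ ε' := by
        have hc : ρ x m = ∑ i, ‖f i x‖ * ‖lam i ^ m - 1‖ := by
          refine Finset.sum_congr rfl fun i _ => ?_
          rw [hiter i m]
          have : f i x - lam i ^ m * f i x = f i x * (1 - lam i ^ m) := by ring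
          rw [this, norm_mul, norm_sub_rev]
        rw [hc]
        calc ∑ i, ‖f i x‖ * ‖lam i ^ m - 1‖
            ≤ ∑ i, ‖f i x‖ * (ε' / (B + 1)) :=
              Finset.sum_le_sum fun i _ =>
                mul_le_mul_of_nonneg_left (hm2 i).le (norm_nonneg _)
          _ = B * (ε' / (B + 1)) := by rw [← Finset.sum_mul]
          _ ≤ (B + 1) * (ε' / (B + 1)) := by
              refine mul_le_mul_of_nonneg_right (by linarith) hpos.le
          _ = ε' := by field_simp
      calc h z ≤ ρ z (m - 1) := hle z (m - 1)
        _ = ρ (φ z) m := by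
            rw [← hstep z (m - 1)]
            congr 1
            omega
        _ ≤ ρ (φ z) 0 + ρ x m := htri (φ z) m
        _ ≤ ρ (φ z) 0 + ε' := by linarith
  have hcont : Continuous h := by
    rw [continuous_iff_continuousAt]
    intro z₀
    have : ContinuousAt h z₀ ↔ Filter.Tendsto h (nhds z₀) (nhds (h z₀)) := Iff.rfl
    rw [this, Metric.tendsto_nhds]
    intro ε' hε'
    set c : ℝ := (Fintype.card ι : ℝ) with hc
    have hcnn : 0 ≤ c := Nat.cast_nonneg _
    have hpos : 0 < ε' / (c + 1) := div_pos hε' (by linarith)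
    have hev : ∀ᶠ z in nhds z₀, ∀ i, ‖f i z - f i z₀‖ < ε' / (c + 1) := by
      rw [Filter.eventually_all]
      intro i
      have htend := (f i).continuous.tendsto z₀
      rw [Metric.tendsto_nhds] at htend
      filter_upwards [htend _ hpos] with z hz
      rwa [dist_eq_norm] at hz
    filter_upwards [hev] with z hz
    set D : ℝ := ∑ i, ‖f i z - f i z₀‖ with hDd
    have hDnn : 0 ≤ D := Finset.sum_nonneg fun i _ => norm_nonneg _
    have hD : D < ε' := by
      calc D ≤ ∑ _i : ι, ε' / (c + 1) :=
            Finset.sum_le_sum fun i _ => (hz i).le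
        _ = c * (ε' / (c + 1)) := by
            rw [Finset.sum_const, Finset.card_univ, nsmul_eq_mul, hc]
        _ < (c + 1) * (ε' / (c + 1)) := by
            refine mul_lt_mul_of_pos_right (by linarith) hpos
        _ = ε' := by field_simp
    have hb1 : ∀ n, ρ z n ≤ ρ z₀ n + D := by
      intro n
      rw [hDd, ← Finset.sum_add_distrib]
      refine Finset.sum_le_sum fun i _ => ?_
      have hrw : f i z - f i (φ^[n] x)
          = (f i z₀ - f i (φ^[n] x)) + (f i z - f i z₀) := by ring
      rw [hrw]
      exact norm_add_le _ _
    have hb2 : ∀ n, ρ z₀ n ≤ ρ z n + D := by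
      intro n
      rw [hDd, ← Finset.sum_add_distrib]
      refine Finset.sum_le_sum fun i _ => ?_
      have hrw : f i z₀ - f i (φ^[n] x)
          = (f i z - f i (φ^[n] x)) + -(f i z - f i z₀) := by ring
      rw [hrw]
      exact (norm_add_le _ _).trans (by rw [norm_neg])
    have h1 : h z ≤ h z₀ + D := by
      have : ∀ n, h z - D ≤ ρ z₀ n := fun n => by
        have := (hle z n).trans (hb1 n); linarith
      have := le_ciInf this
      linarith
    have h2 : h z₀ ≤ h z + D := by
      have : ∀ n, h z₀ - D ≤ ρ z n := fun n => by
        have := (hle z₀ n).trans (hb2 n); linarith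
      have := le_ciInf this
      linarith
    rw [Real.dist_eq, abs_lt]
    constructor <;> linarith
  set hC : C(K, ℂ) := ⟨fun z => (h z : ℂ), Complex.continuous_ofReal.comp hcont⟩ with hhC
  have hfix : ∀ z, hC (φ z) = hC z := by
    intro z
    simp only [hhC, ContinuousMap.coe_mk]
    exact_mod_cast congrArg (fun r : ℝ => (r : ℂ)) (hinv2 z)
  have hxyC := hconst hC hfix
  simp only [hhC, ContinuousMap.coe_mk] at hxyC
  have hxy : h x = h y := by exact_mod_cast hxyC
  have hx0 : h x = 0 := by
    refine le_antisymm ?_ (hhnn x)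
    have := hle x 0
    have hz : ρ x 0 = 0 := by
      rw [hρ]
      simp
    linarith
  have hy0 : h y = 0 := by rw [← hxy, hx0]
  have hlt : (⨅ n, ρ y n) < ε := by
    rw [hh] at hy0
    simp only [] at hy0
    rw [hy0]
    exact hε
  obtain ⟨n, hn⟩ := exists_lt_of_ciInf_lt hlt
  refine ⟨n, fun i => lt_of_le_of_lt ?_ hn⟩
  exact Finset.single_le_sum (f := fun j => ‖f j y - f j (φ^[n] x)‖)
    (fun j _ => norm_nonneg _) (Finset.mem_univ i)

/-- Let `(K, φ)` be a topological dynamical system with discrete spectrum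
and `q : K → L` a projection onto its maximal trivial factor.  Then every fiber system
`(K_l, φ_l)` is minimal and has discrete spectrum. -/
theorem fibers_minimal_and_discreteSpectrum
    {K L : Type*} [TopologicalSpace K] [CompactSpace K] [T2Space K]
    [TopologicalSpace L] [CompactSpace L] [T2Space L]
    (φ : K → K) (hφ : Continuous φ) (hds : DiscreteSpectrum φ)
    (q : K → L) (hq : Continuous q) (hqsurj : Function.Surjective q)
    (hinv : ∀ x, q (φ x) = q x)
    (hmax : ∀ f : C(K, ℂ), (∀ x, f (φ x) = f x) ↔ ∃ g : C(L, ℂ), f = g.comp ⟨q, hq⟩) :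
    ∀ l : L, IsMinimalSystem (fiberMap φ q hinv l) ∧ DiscreteSpectrum (fiberMap φ q hinv l) := by
  classical
  intro l
  set P : Set K := q ⁻¹' {l} with hPdef
  have hPclosed : IsClosed P := isClosed_singleton.preimage hq
  haveI : CompactSpace ↥P := isCompact_iff_compactSpace.mp hPclosed.isCompact
  set ψ : ↥P → ↥P := fiberMap φ q hinv l with hψdef
  have hval : ∀ (n : ℕ) (z : ↥P), ((ψ^[n] z : ↥P) : K) = φ^[n] (z : K) := by
    intro n
    induction n with
    | zero => intro z; simp
    | succ n ih =>
      intro z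
      rw [Function.iterate_succ_apply', Function.iterate_succ_apply', ← ih z]
      rfl
  -- orbit density in fibers
  have horbit : ∀ x y : K, x ∈ P → y ∈ P →
      y ∈ closure (Set.range fun n => φ^[n] x) := by
    intro x y hx hy
    by_contra hno
    set R : Set K := closure (Set.range fun n => φ^[n] x) with hR
    have hRcomp : IsCompact R := isClosed_closure.isCompact
    have hconst : ∀ f : C(K, ℂ), (∀ z, f (φ z) = f z) → f x = f y := by
      intro f hf
      obtain ⟨g, hg⟩ := (hmax f).mp hf
      rw [hg]
      show g (q x) = g (q y)
      have hx' : q x = l := hx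
      have hy' : q y = l := hy
      rw [hx', hy']
    have hne : ∀ w : ↥R, (w : K) ≠ y := fun w hweq => hno (hweq ▸ w.2)
    choose F hFE hFne using fun w : ↥R => aux_sep hds (hne w)
    choose lam hlam heig using fun w : ↥R => (hFE w).2
    set δ : ↥R → ℝ := fun w => ‖F w (w : K) - F w y‖ / 2 with hδ
    have hδpos : ∀ w, 0 < δ w := by
      intro w
      have h1 : F w (w : K) - F w y ≠ 0 := sub_ne_zero.mpr (hFne w)
      have := norm_pos_iff.mpr h1
      rw [hδ]
      positivity
    set V : ↥R → Set K := fun w => {u | δ w < ‖F w u - F w y‖} with hV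
    have hVopen : ∀ w, IsOpen (V w) := fun w =>
      isOpen_lt continuous_const (((F w).continuous.sub continuous_const).norm)
    have hcover : R ⊆ ⋃ w, V w := by
      intro u hu
      refine Set.mem_iUnion.mpr ⟨⟨u, hu⟩, ?_⟩
      show δ ⟨u, hu⟩ < ‖F ⟨u, hu⟩ u - F ⟨u, hu⟩ y‖
      have h1 : F ⟨u, hu⟩ u - F ⟨u, hu⟩ y ≠ 0 := sub_ne_zero.mpr (hFne ⟨u, hu⟩)
      have h2 := norm_pos_iff.mpr h1
      rw [hδ]
      linarith [half_lt_self h2]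
    obtain ⟨t, ht⟩ := hRcomp.elim_finite_subcover V hVopen hcover
    have hxR : x ∈ R := subset_closure ⟨0, by simp⟩
    have htne : t.Nonempty := by
      rcases Set.mem_iUnion₂.mp (ht hxR) with ⟨w, hwt, -⟩
      exact ⟨w, hwt⟩
    set ε₀ : ℝ := t.inf' htne δ with hε₀def
    have hε₀ : 0 < ε₀ := (Finset.lt_inf'_iff htne).mpr fun w _ => hδpos w
    obtain ⟨n, hn⟩ := aux_key (ι := ↥t) φ x y hconst (fun j : ↥t => F ↑j)
      (fun j : ↥t => lam ↑j) (fun j : ↥t => hlam ↑j) (fun j : ↥t => heig ↑j) hε₀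
    have hmem : φ^[n] x ∈ R := subset_closure ⟨n, rfl⟩
    obtain ⟨w, hwt, hwV⟩ := Set.mem_iUnion₂.mp (ht hmem)
    have h1 : ‖F w y - F w (φ^[n] x)‖ < ε₀ := hn ⟨w, hwt⟩
    have h2 : ε₀ ≤ δ w := Finset.inf'_le δ hwt
    have h3 : δ w < ‖F w (φ^[n] x) - F w y‖ := hwV
    rw [norm_sub_rev] at h3
    linarith
  constructor
  · -- minimality
    intro C hCclosed hCmaps hCne
    obtain ⟨z, hz⟩ := hCne
    apply Set.eq_univ_of_forall
    intro w
    have hy := horbit (z : K) (w : K) z.2 w.2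
    have hwcl : w ∈ closure (Set.range fun n => ψ^[n] z) := by
      rw [closure_subtype]
      have himg : Subtype.val '' (Set.range fun n => ψ^[n] z)
          = Set.range fun n => φ^[n] (z : K) := by
        rw [← Set.range_comp]
        exact congrArg Set.range (funext fun n => hval n z)
      rw [himg]
      exact hy
    refine closure_minimal ?_ hCclosed hwcl
    rw [Set.range_subset_iff]
    exact fun n => hCmaps.iterate n hz
  · -- discrete spectrum of the fiber
    intro g
    rw [Metric.mem_closure_iff]
    intro ε hε
    obtain ⟨G, hG⟩ := ContinuousMap.exists_restrict_eq (Y := ℂ) hPclosed g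
    have hmem := hds G
    rw [Metric.mem_closure_iff] at hmem
    obtain ⟨p, hp, hdist⟩ := hmem ε hε
    set Rlin : C(K, ℂ) →ₗ[ℂ] C(↥P, ℂ) :=
      { toFun := fun f => f.restrict P
        map_add' := fun a b => rfl
        map_smul' := fun c a => rfl } with hRlin
    refine ⟨Rlin p, ?_, ?_⟩
    · -- membership in span of fiber eigenfunctions
      have hmem2 : Rlin p ∈ Submodule.map Rlin (Submodule.span ℂ
          {f : C(K, ℂ) | f ≠ 0 ∧ ∃ lam : ℂ, ‖lam‖ = 1 ∧ ∀ x, f (φ x) = lam * f x}) :=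
        ⟨p, hp, rfl⟩
      rw [Submodule.map_span] at hmem2
      have hsub : (⇑Rlin '' {f : C(K, ℂ) | f ≠ 0 ∧ ∃ lam : ℂ, ‖lam‖ = 1 ∧
          ∀ x, f (φ x) = lam * f x}) ⊆
          ↑(Submodule.span ℂ {f : C(↥P, ℂ) | f ≠ 0 ∧ ∃ lam : ℂ, ‖lam‖ = 1 ∧
            ∀ x, f (fiberMap φ q hinv l x) = lam * f x}) := by
        rintro - ⟨f, ⟨-, lam, hlam, heig⟩, rfl⟩
        by_cases h0 : Rlin f = 0
        · rw [h0]
          exact Submodule.zero_mem _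
        · refine Submodule.subset_span ⟨h0, lam, hlam, fun u => ?_⟩
          show f ((fiberMap φ q hinv l u : ↥P) : K) = lam * f (u : K)
          exact heig (u : K)
      exact Submodule.span_le.mpr hsub (Submodule.span_le.mpr
        (Submodule.subset_span) hmem2)
    · rw [dist_eq_norm, ← hG]
      have heq : G.restrict P - Rlin p = Rlin (G - p) := rfl
      rw [heq]
      have hnorm : ‖Rlin (G - p)‖ ≤ ‖G - p‖ := by
        refine (ContinuousMap.norm_le _ (norm_nonneg _)).mpr fun u => ?_
        show ‖(G - p) (u : K)‖ ≤ ‖G - p‖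
        exact ContinuousMap.norm_coe_le_norm (G - p) (u : K)
      calc ‖Rlin (G - p)‖ ≤ ‖G - p‖ := hnorm
        _ = dist G p := (dist_eq_norm G p).symm
        _ < ε := hdist
end

section
/- Let (K, φ) be a topological dynamical system with discrete spectrum, q : K → L a projection onto its maximal trivial factor, l ∈ L, λ ∈ ℂ with |λ| = 1, and let f ∈ C(K_l) be a nonzero continuous function on the fiber K_l with f ∘ φ_l = λ f. Then there exists f̃ ∈ C(K) with f̃ ∘ φ = λ f̃ and f̃|_{K_l} = f. Consequently, there is an open neighborhood U of l in L such that for every l' ∈ U, λ is an eigenvalue of the Koopman operator of the fiber system (K_{l'}, φ_{l'}); i.e., the point spectrum bundle of (K, φ) is lower-semicontinuous. -/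
open Filter Topology

/-- Let `(K, φ)` be a topological dynamical system with discrete spectrum,
`q : K → L` a projection onto its maximal trivial factor, `l ∈ L`, `λ` a unimodular complex
number and `f` a nonzero continuous eigenfunction on the fiber `K_l` with `f ∘ φ_l = λ f`.
Then `f` extends to an eigenfunction `f̃ ∈ C(K)` with `f̃ ∘ φ = λ f̃`, and there is an open
neighborhood `U` of `l` such that `λ` is an eigenvalue of the Koopman operator of every fiber
system `(K_{l'}, φ_{l'})` with `l' ∈ U`; i.e. the point spectrum bundle of `(K, φ)` is
lower-semicontinuous. -/
theorem eigenfunction_extension_and_pointSpectrum_lsc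
    {K L : Type*} [TopologicalSpace K] [CompactSpace K] [T2Space K]
    [TopologicalSpace L] [CompactSpace L] [T2Space L]
    (φ : K → K) (hφ : Continuous φ) (hds : DiscreteSpectrum φ)
    (q : K → L) (hq : Continuous q) (hqsurj : Function.Surjective q)
    (hinv : ∀ x, q (φ x) = q x)
    (hmax : ∀ f : C(K, ℂ), (∀ x, f (φ x) = f x) ↔ ∃ g : C(L, ℂ), f = g.comp ⟨q, hq⟩)
    (l : L) (lam : ℂ) (hlam : ‖lam‖ = 1)
    (f : C(↥(q ⁻¹' {l}), ℂ)) (hf0 : f ≠ 0)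
    (hfeig : ∀ x : ↥(q ⁻¹' {l}), f (fiberMap φ q hinv l x) = lam * f x) :
    (∃ ftil : C(K, ℂ), (∀ x : K, ftil (φ x) = lam * ftil x) ∧
        ∀ x : ↥(q ⁻¹' {l}), ftil ↑x = f x) ∧
      ∃ U : Set L, IsOpen U ∧ l ∈ U ∧ ∀ l' ∈ U,
        ∃ g : C(↥(q ⁻¹' {l'}), ℂ), g ≠ 0 ∧
          ∀ x : ↥(q ⁻¹' {l'}), g (fiberMap φ q hinv l' x) = lam * g x := by
  classical
  set lc : ℂ := (starRingEnd ℂ) lam with hlc_def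
  have hlc_norm : ‖lc‖ = 1 := by rw [hlc_def, RCLike.norm_conj]; exact hlam
  have hlc_mul : lc * lam = 1 := by
    rw [hlc_def, mul_comm, Complex.mul_conj, Complex.normSq_eq_norm_sq,
      hlam]
    norm_num
  -- the Cesàro average operators
  let Tn : ℕ → C(K, ℂ) →ₗ[ℂ] C(K, ℂ) := fun n =>
    { toFun := fun F => F.comp ⟨φ^[n], hφ.iterate n⟩
      map_add' := fun _ _ => rfl
      map_smul' := fun _ _ => rfl }
  let A : ℕ → C(K, ℂ) →ₗ[ℂ] C(K, ℂ) := fun N =>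
    (N : ℂ)⁻¹ • ∑ n ∈ Finset.range N, lc ^ n • Tn n
  have hA_apply : ∀ (N : ℕ) (F : C(K, ℂ)) (x : K),
      A N F x = (N : ℂ)⁻¹ * ∑ n ∈ Finset.range N, lc ^ n * F (φ^[n] x) := by
    intro N F x
    simp [A, Tn, LinearMap.sum_apply, Finset.mul_sum]
  -- norm bounds
  have hcomp_norm : ∀ (n : ℕ) (F : C(K, ℂ)), ‖Tn n F‖ ≤ ‖F‖ := by
    intro n F
    exact (ContinuousMap.norm_le _ (norm_nonneg F)).mpr fun x => F.norm_coe_le_norm _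
  have hA_norm : ∀ (N : ℕ), 1 ≤ N → ∀ (F : C(K, ℂ)), ‖A N F‖ ≤ ‖F‖ := by
    intro N hN F
    have hN0 : (0 : ℝ) < N := by exact_mod_cast hN
    have h1 : ‖(∑ n ∈ Finset.range N, lc ^ n • Tn n) F‖ ≤ N * ‖F‖ := by
      rw [LinearMap.sum_apply]
      calc ‖∑ n ∈ Finset.range N, (lc ^ n • Tn n) F‖
          ≤ ∑ n ∈ Finset.range N, ‖(lc ^ n • Tn n) F‖ := norm_sum_le _ _
        _ ≤ ∑ _n ∈ Finset.range N, ‖F‖ := by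
            refine Finset.sum_le_sum fun n _ => ?_
            rw [LinearMap.smul_apply, norm_smul, norm_pow, hlc_norm, one_pow, one_mul]
            exact hcomp_norm n F
        _ = N * ‖F‖ := by rw [Finset.sum_const, Finset.card_range, nsmul_eq_mul]
    have heq : A N F = (N : ℂ)⁻¹ • (∑ n ∈ Finset.range N, lc ^ n • Tn n) F := rfl
    rw [heq, norm_smul, norm_inv]
    rw [show ‖(N : ℂ)‖ = (N : ℝ) from by exact_mod_cast Complex.norm_natCast N]
    calc (N : ℝ)⁻¹ * ‖(∑ n ∈ Finset.range N, lc ^ n • Tn n) F‖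
        ≤ (N : ℝ)⁻¹ * (N * ‖F‖) := by
          exact mul_le_mul_of_nonneg_left h1 (inv_nonneg.mpr hN0.le)
      _ = ‖F‖ := by rw [← mul_assoc, inv_mul_cancel₀ hN0.ne', one_mul]
  -- eigenfunctions iterate nicely
  have hiter : ∀ (mu : ℂ) (h : C(K, ℂ)), (∀ x, h (φ x) = mu * h x) →
      ∀ (n : ℕ) (x : K), h (φ^[n] x) = mu ^ n * h x := by
    intro mu h hh n
    induction n with
    | zero => intro x; simp
    | succ n ih =>
        intro x
        rw [Function.iterate_succ_apply', hh, ih, pow_succ]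
        ring
  -- averages of eigenfunctions
  have hAeig : ∀ (mu : ℂ) (h : C(K, ℂ)), (∀ x, h (φ x) = mu * h x) → ∀ N : ℕ,
      A N h = ((N : ℂ)⁻¹ * ∑ n ∈ Finset.range N, (lc * mu) ^ n) • h := by
    intro mu h hh N
    ext x
    rw [hA_apply]
    simp only [ContinuousMap.smul_apply, smul_eq_mul]
    have hc : ∀ n ∈ Finset.range N, lc ^ n * h (φ^[n] x) = (lc * mu) ^ n * h x := by
      intro n _
      rw [hiter mu h hh n x, mul_pow]
      ring
    rw [Finset.sum_congr rfl hc, ← Finset.sum_mul, ← mul_assoc]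
  -- scalar averages converge
  have hscal : ∀ mu : ℂ, ‖mu‖ = 1 → ∃ c : ℂ,
      Tendsto (fun N : ℕ => (N : ℂ)⁻¹ * ∑ n ∈ Finset.range N, (lc * mu) ^ n)
        atTop (𝓝 c) := by
    intro mu hmu
    by_cases hz : lc * mu = 1
    · refine ⟨1, ?_⟩
      have hev : ∀ᶠ N : ℕ in atTop,
          (1 : ℂ) = (N : ℂ)⁻¹ * ∑ n ∈ Finset.range N, (lc * mu) ^ n := by
        filter_upwards [eventually_ge_atTop 1] with N hN
        have hN0 : (N : ℂ) ≠ 0 := Nat.cast_ne_zero.mpr (by omega)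
        rw [hz]
        simp [inv_mul_cancel₀ hN0]
      exact Tendsto.congr' hev tendsto_const_nhds
    · refine ⟨0, ?_⟩
      have hbd : ∀ N : ℕ, ‖(N : ℂ)⁻¹ * ∑ n ∈ Finset.range N, (lc * mu) ^ n‖
          ≤ (N : ℝ)⁻¹ * (2 / ‖lc * mu - 1‖) := by
        intro N
        rw [norm_mul, norm_inv, geom_sum_eq hz, norm_div]
        rw [show ‖(N : ℂ)‖ = (N : ℝ) from by exact_mod_cast Complex.norm_natCast N]
        have h2 : ‖(lc * mu) ^ N - 1‖ ≤ 2 := by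
          calc ‖(lc * mu) ^ N - 1‖ ≤ ‖(lc * mu) ^ N‖ + ‖(1 : ℂ)‖ := norm_sub_le _ _
            _ = 2 := by
                rw [norm_pow, norm_mul, hlc_norm, hmu, one_mul, one_pow, norm_one]
                norm_num
        gcongr
      refine squeeze_zero_norm hbd ?_
      simpa using (tendsto_inv_atTop_nhds_zero_nat (𝕜 := ℝ)).mul_const (2 / ‖lc * mu - 1‖)
  -- convergence on the span of eigenfunctions
  set S : Set C(K, ℂ) :=
    {h : C(K, ℂ) | h ≠ 0 ∧ ∃ mu : ℂ, ‖mu‖ = 1 ∧ ∀ x, h (φ x) = mu * h x} with hS_def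
  have hspan : ∀ h ∈ Submodule.span ℂ S,
      ∃ G, Tendsto (fun N => A N h) atTop (𝓝 G) := by
    intro h hh
    induction hh using Submodule.span_induction with
    | mem h hmem =>
        obtain ⟨-, mu, hmu, heq⟩ := hmem
        obtain ⟨c, hc⟩ := hscal mu hmu
        refine ⟨c • h, ?_⟩
        have : (fun N => A N h)
            = fun N : ℕ => ((N : ℂ)⁻¹ * ∑ n ∈ Finset.range N, (lc * mu) ^ n) • h :=
          funext fun N => hAeig mu h heq N
        rw [this]
        exact hc.smul_const h
    | zero => exact ⟨0, by simp only [map_zero]; exact tendsto_const_nhds⟩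
    | add h h' _ _ ih ih' =>
        obtain ⟨G, hG⟩ := ih
        obtain ⟨G', hG'⟩ := ih'
        exact ⟨G + G', by simpa only [map_add] using hG.add hG'⟩
    | smul c h _ ih =>
        obtain ⟨G, hG⟩ := ih
        exact ⟨c • G, by simpa only [map_smul] using hG.const_smul c⟩
  -- convergence everywhere
  have hconv : ∀ F : C(K, ℂ), ∃ G, Tendsto (fun N => A N F) atTop (𝓝 G) := by
    intro F
    refine cauchySeq_tendsto_of_complete ?_
    rw [Metric.cauchySeq_iff]
    intro ε hε
    obtain ⟨h, hhmem, hhdist⟩ : ∃ h ∈ (Submodule.span ℂ S : Set C(K, ℂ)),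
        dist F h < ε / 4 := by
      have hF := hds F
      rw [Metric.mem_closure_iff] at hF
      exact hF (ε / 4) (by linarith)
    obtain ⟨G, hG⟩ := hspan h hhmem
    have hGc := hG.cauchySeq
    rw [Metric.cauchySeq_iff] at hGc
    obtain ⟨M, hM⟩ := hGc (ε / 4) (by linarith)
    refine ⟨max M 1, fun m hm n hn => ?_⟩
    have h1m : 1 ≤ m := le_trans (le_max_right M 1) hm
    have h1n : 1 ≤ n := le_trans (le_max_right M 1) hn
    have hdF : ∀ k : ℕ, 1 ≤ k → dist (A k F) (A k h) < ε / 4 := by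
      intro k hk
      rw [dist_eq_norm, ← map_sub]
      calc ‖A k (F - h)‖ ≤ ‖F - h‖ := hA_norm k hk _
        _ < ε / 4 := by rwa [← dist_eq_norm]
    calc dist (A m F) (A n F)
        ≤ dist (A m F) (A m h) + dist (A m h) (A n h) + dist (A n h) (A n F) :=
          dist_triangle4 _ _ _ _
      _ < ε / 4 + ε / 4 + ε / 4 := by
          refine add_lt_add (add_lt_add (hdF m h1m)
            (hM m (le_trans (le_max_left M 1) hm) n (le_trans (le_max_left M 1) hn))) ?_
          rw [dist_comm]; exact hdF n h1n
      _ < ε := by linarith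
  -- Tietze extension of f
  have hKl_closed : IsClosed (q ⁻¹' {l}) := isClosed_singleton.preimage hq
  obtain ⟨F, hF⟩ := ContinuousMap.exists_restrict_eq hKl_closed f
  have hFx : ∀ x : ↥(q ⁻¹' {l}), F ↑x = f x := by
    intro x
    rw [← hF, ContinuousMap.restrict_apply]
  obtain ⟨ftil, hftil⟩ := hconv F
  have hpt : ∀ x : K, Tendsto (fun N => A N F x) atTop (𝓝 (ftil x)) := by
    intro x
    exact ((continuous_eval_const x).tendsto ftil).comp hftil
  -- q is invariant under iterates
  have hq_it : ∀ (n : ℕ) (x : K), q (φ^[n] x) = q x := by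
    intro n
    induction n with
    | zero => intro x; simp
    | succ n ih => intro x; rw [Function.iterate_succ_apply', hinv, ih]
  -- F iterates on the fiber like an eigenfunction
  have hFiter : ∀ (n : ℕ) (x : ↥(q ⁻¹' {l})), F (φ^[n] ↑x) = lam ^ n * f x := by
    intro n
    induction n with
    | zero => intro x; simp [hFx x]
    | succ n ih =>
        intro x
        have hy : φ^[n] (x : K) ∈ q ⁻¹' {l} := by
          have hx2 : q (x : K) = l := x.2
          simp [Set.mem_preimage, hq_it n x, hx2]
        have hstep : F (φ^[n + 1] (x : K))
            = f (fiberMap φ q hinv l ⟨φ^[n] (x : K), hy⟩) := by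
          rw [Function.iterate_succ_apply']
          exact hFx (fiberMap φ q hinv l ⟨φ^[n] (x : K), hy⟩)
        rw [hstep, hfeig]
        have : f ⟨φ^[n] (x : K), hy⟩ = F (φ^[n] (x : K)) := (hFx _).symm
        rw [this, ih x, pow_succ]
        ring
  -- averages are constantly f on the fiber
  have hAF_fiber : ∀ (N : ℕ), 1 ≤ N → ∀ x : ↥(q ⁻¹' {l}), A N F ↑x = f x := by
    intro N hN x
    rw [hA_apply]
    have hc : ∀ n ∈ Finset.range N, lc ^ n * F (φ^[n] (x : K)) = f x := by
      intro n _
      rw [hFiter n x, ← mul_assoc, ← mul_pow, hlc_mul, one_pow, one_mul]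
    rw [Finset.sum_congr rfl hc, Finset.sum_const, Finset.card_range, nsmul_eq_mul,
      ← mul_assoc, inv_mul_cancel₀ (Nat.cast_ne_zero.mpr (by omega) : (N : ℂ) ≠ 0), one_mul]
  have hrestrict : ∀ x : ↥(q ⁻¹' {l}), ftil ↑x = f x := by
    intro x
    refine tendsto_nhds_unique (hpt ↑x) ?_
    refine Tendsto.congr' ?_ tendsto_const_nhds
    filter_upwards [eventually_ge_atTop 1] with N hN
    exact (hAF_fiber N hN x).symm
  -- the eigenvalue equation for the limit
  have hAdiff : ∀ (N : ℕ) (x : K),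
      A N F (φ x) - lam * A N F x
        = (N : ℂ)⁻¹ * lam * (lc ^ N * F (φ^[N] x) - F x) := by
    intro N x
    have h1 : ∀ n : ℕ, lc ^ n * F (φ^[n] (φ x)) = lam * (lc ^ (n + 1) * F (φ^[n + 1] x)) := by
      intro n
      rw [← Function.iterate_succ_apply]
      linear_combination (-(lc ^ n * F (φ^[n + 1] x))) * hlc_mul
    have h2 : ∑ n ∈ Finset.range N, lc ^ n * F (φ^[n] (φ x))
        = lam * ((∑ n ∈ Finset.range N, lc ^ n * F (φ^[n] x))
            + lc ^ N * F (φ^[N] x) - F x) := by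
      rw [Finset.sum_congr rfl fun n _ => h1 n, ← Finset.mul_sum]
      congr 1
      have ha := Finset.sum_range_succ' (fun m => lc ^ m * F (φ^[m] x)) N
      have hb := Finset.sum_range_succ (fun m => lc ^ m * F (φ^[m] x)) N
      simp only [pow_zero, one_mul, Function.iterate_zero, id_eq] at ha
      linear_combination hb - ha
    rw [hA_apply, hA_apply, h2]
    ring
  have heig : ∀ x : K, ftil (φ x) = lam * ftil x := by
    intro x
    have hl1 : Tendsto (fun N => A N F (φ x) - lam * A N F x) atTop
        (𝓝 (ftil (φ x) - lam * ftil x)) := (hpt (φ x)).sub ((hpt x).const_mul lam)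
    have hl2 : Tendsto (fun N => A N F (φ x) - lam * A N F x) atTop (𝓝 0) := by
      refine squeeze_zero_norm (a := fun N : ℕ => (N : ℝ)⁻¹ * (‖F‖ + ‖F‖)) ?_ ?_
      · intro N
        rw [hAdiff N x, norm_mul, norm_mul, norm_inv, hlam, mul_one]
        rw [show ‖(N : ℂ)‖ = (N : ℝ) from by exact_mod_cast Complex.norm_natCast N]
        refine mul_le_mul_of_nonneg_left ?_ (inv_nonneg.mpr (Nat.cast_nonneg N))
        calc ‖lc ^ N * F (φ^[N] x) - F x‖ ≤ ‖lc ^ N * F (φ^[N] x)‖ + ‖F x‖ := norm_sub_le _ _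
          _ ≤ ‖F‖ + ‖F‖ := by
              refine add_le_add ?_ (F.norm_coe_le_norm x)
              rw [norm_mul, norm_pow, hlc_norm, one_pow, one_mul]
              exact F.norm_coe_le_norm _
      · simpa using (tendsto_inv_atTop_nhds_zero_nat (𝕜 := ℝ)).mul_const (‖F‖ + ‖F‖)
    have := tendsto_nhds_unique hl1 hl2
    exact sub_eq_zero.mp this
  -- part 2: the invariant function |ftil|
  have habs_cont : Continuous fun x : K => (‖ftil x‖ : ℂ) :=
    Complex.continuous_ofReal.comp ftil.continuous.norm
  set absf : C(K, ℂ) := ⟨fun x => (‖ftil x‖ : ℂ), habs_cont⟩ with habsf_def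
  have habs_inv : ∀ x, absf (φ x) = absf x := by
    intro x
    simp only [habsf_def, ContinuousMap.coe_mk]
    rw [heig x, norm_mul, hlam, one_mul]
  obtain ⟨g, hg⟩ := (hmax absf).mp habs_inv
  have hgq : ∀ x : K, g (q x) = (‖ftil x‖ : ℂ) := by
    intro x
    have := DFunLike.congr_fun hg x
    simpa [ContinuousMap.comp_apply, habsf_def] using this.symm
  obtain ⟨x0, hx0⟩ : ∃ x0 : ↥(q ⁻¹' {l}), f x0 ≠ 0 := by
    by_contra hc
    push_neg at hc
    exact hf0 (ContinuousMap.ext fun x => by simp [hc x])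
  refine ⟨⟨ftil, heig, hrestrict⟩, {l' | g l' ≠ 0}, ?_, ?_, ?_⟩
  · have : {l' | g l' ≠ 0} = (fun l' => g l') ⁻¹' {(0 : ℂ)}ᶜ := rfl
    rw [this]
    exact isOpen_compl_singleton.preimage g.continuous
  · have hql : q ↑x0 = l := x0.2
    show g l ≠ 0
    rw [← hql, hgq]
    simp only [ne_eq, Complex.ofReal_eq_zero, norm_eq_zero]
    rw [hrestrict x0]
    exact hx0
  · intro l' hl'
    refine ⟨ftil.restrict (q ⁻¹' {l'}), ?_, ?_⟩
    · intro hzero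
      obtain ⟨x, hx⟩ := hqsurj l'
      have hxmem : x ∈ q ⁻¹' {l'} := by simp [hx]
      have hfz : ftil x = 0 := by
        have := DFunLike.congr_fun hzero ⟨x, hxmem⟩
        simpa [ContinuousMap.restrict_apply] using this
      apply hl'
      show g l' = 0
      rw [← hx, hgq, hfz]
      simp
    · intro x
      simp only [ContinuousMap.restrict_apply]
      exact heig ↑x
end
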